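/- Let (X_k) be a sequence of nonempty metric spaces and let Y be a nonempty metric space such that d̂(X_k, Y) → 0 as k → ∞. If every X_k is a separable metric space, then Y is separable. -/
import Mathlib


open ENNReal

/-- `f` is an `(A,B)`-quasi-isometric embedding. -/
def QIEmb {X Y : Type*} [MetricSpace X] [MetricSpace Y] (A B : ℝ) (f : X → Y) : Prop :=
  ∀ x x' : X, (1 / A) * dist x x' - B ≤ dist (f x) (f x') ∧
    dist (f x) (f x') ≤ A * dist x x' + B

/-- `X` and `Y` are `(A,B,C)`-quasi-isometric. -/
def QuasiIsometric (X Y : Type*) [MetricSpace X] [MetricSpace Y] (A B C : ℝ) : Prop :=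
  ∃ (f : X → Y) (g : Y → X), QIEmb A B f ∧ QIEmb A B g ∧
    (∀ x : X, dist (g (f x)) x ≤ C) ∧ (∀ y : Y, dist (f (g y)) y ≤ C)

/-- The quasi-isometric distance `d̂`. -/
noncomputable def qiDist (X Y : Type*) [MetricSpace X] [MetricSpace Y] : ℝ≥0∞ :=
  sInf {e : ℝ≥0∞ | ∃ r : ℝ, 0 < r ∧ e = ENNReal.ofReal r ∧ QuasiIsometric X Y (1 + r) r r}

open Filter

/-- Separability is inherited by quasi-isometric limits. -/
theorem separable_of_qi_limit
    (X : ℕ → Type*) [∀ k, MetricSpace (X k)] [∀ k, Nonempty (X k)]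
    (Y : Type*) [MetricSpace Y] [Nonempty Y]
    (hconv : Tendsto (fun k => qiDist (X k) Y) atTop (nhds 0))
    (hsep : ∀ k, TopologicalSpace.SeparableSpace (X k)) :
    TopologicalSpace.SeparableSpace Y := by
  -- Step 1: for every ε > 0 there is a countable ε-net of Y.
  have key : ∀ ε : ℝ, 0 < ε → ∃ S : Set Y, S.Countable ∧ ∀ y : Y, ∃ s ∈ S, dist y s < ε := by
    intro ε hε
    set δ : ℝ := min (ε / 4) 1 with hδdef
    have hδ : 0 < δ := lt_min (by linarith) one_pos
    -- eventually qiDist < ofReal δ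
    have h1 : ∀ᶠ k in atTop, qiDist (X k) Y < ENNReal.ofReal δ := by
      have : ENNReal.ofReal δ ≠ 0 := by
        simp [ENNReal.ofReal_eq_zero, not_le, hδ]
      exact hconv.eventually_lt_const (by simpa [pos_iff_ne_zero] using this)
    obtain ⟨k, hk⟩ := h1.exists
    -- extract r and quasi-isometry
    have hnon : qiDist (X k) Y < ENNReal.ofReal δ := hk
    obtain ⟨e, ⟨r, hr0, rfl, hQI⟩, he⟩ := exists_lt_of_csInf_lt
      (by
        rcases eq_or_ne (qiDist (X k) Y) ⊤ with h | h
        · exact absurd hnon (by simp [h])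
        · -- sInf of empty set is ⊤ in ℝ≥0∞, so set must be nonempty
          by_contra hempty
          rw [Set.not_nonempty_iff_eq_empty] at hempty
          rw [qiDist, hempty, sInf_empty] at hnon
          exact absurd hnon (by simp)) hnon
    have hrδ : r < δ := by
      rw [ENNReal.ofReal_lt_ofReal_iff hδ] at he
      exact he
    have hr1 : r < 1 := lt_of_lt_of_le hrδ (min_le_right _ _)
    have hrε : r < ε / 4 := lt_of_lt_of_le hrδ (min_le_left _ _)
    obtain ⟨f, g, hf, hg, hgf, hfg⟩ := hQI
    obtain ⟨D, hDc, hDd⟩ := TopologicalSpace.exists_countable_dense (X k)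
    refine ⟨f '' D, hDc.image f, fun y => ?_⟩
    -- g y is within r of some d ∈ D
    have hmem : g y ∈ closure D := hDd _
    obtain ⟨d, hdD, hdist⟩ := Metric.mem_closure_iff.mp hmem r hr0
    refine ⟨f d, Set.mem_image_of_mem f hdD, ?_⟩
    have h2 : dist (f (g y)) (f d) ≤ (1 + r) * dist (g y) d + r := (hf _ _).2
    have h3 : (1 + r) * dist (g y) d < (1 + r) * r :=
      mul_lt_mul_of_pos_left hdist (by linarith)
    have h4 : dist y (f d) ≤ dist y (f (g y)) + dist (f (g y)) (f d) := dist_triangle _ _ _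
    have h5 : dist y (f (g y)) ≤ r := by rw [dist_comm]; exact hfg y
    nlinarith [dist_nonneg (x := g y) (y := d)]
  -- Step 2: build a countable dense set as a union of 1/(n+1)-nets.
  choose T hTc hTnet using fun n : ℕ => key (1 / (n + 1)) (by positivity)
  refine ⟨⟨⋃ n, T n, Set.countable_iUnion hTc, ?_⟩⟩
  rw [Metric.dense_iff]
  intro y ε hε
  obtain ⟨n, hn⟩ := exists_nat_one_div_lt hε
  obtain ⟨s, hs, hds⟩ := hTnet n y
  exact ⟨s, Metric.mem_ball'.mpr (lt_trans hds (by exact_mod_cast hn)),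
    Set.mem_iUnion.mpr ⟨n, hs⟩⟩
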